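/- Let {X_t}_{t=1}^T be a Markov chain on 𝒳, let S₁ be independent of X^T, let the battery dynamics S_{t+1} = S_t + Y_t − X_t hold, and suppose the policy is causal, i.e., for each t the conditional law of Y_t given (S₁, X^T, Y^{t−1}) depends only on (S₁, X^t, Y^{t−1}). Then I(S₁, X^T; Y^T) ≥ Σ_{t=1}^{T} I(X_t, S_t; Y_t | Y^{t−1}). -/

import Mathlib

open Finset
open scoped Classical

namespace SmartMeter

/-! ### Basic information measures for finitely supported distributions.
All entropies and mutual informations are in bits (base-2 logarithms). -/

/-- Probability that the random variable `Z` takes the value `z` under the pmf `p`. -/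
noncomputable def pr {Ω α : Type*} [Fintype Ω] [DecidableEq α]
    (p : Ω → ℝ) (Z : Ω → α) (z : α) : ℝ :=
  ∑ ω ∈ Finset.univ.filter (fun ω => Z ω = z), p ω

/-- Shannon entropy (in bits) of the random variable `Z` under the pmf `p`. -/
noncomputable def ent {Ω α : Type*} [Fintype Ω] [DecidableEq α]
    (p : Ω → ℝ) (Z : Ω → α) : ℝ :=
  -∑ z ∈ Finset.univ.image Z, pr p Z z * Real.logb 2 (pr p Z z)

/-- Mutual information `I(A; B)`. -/
noncomputable def mutInfo {Ω α β : Type*} [Fintype Ω] [DecidableEq α] [DecidableEq β]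
    (p : Ω → ℝ) (A : Ω → α) (B : Ω → β) : ℝ :=
  ent p A + ent p B - ent p (fun ω => (A ω, B ω))

/-- Conditional entropy `H(A | C)`. -/
noncomputable def condEnt {Ω α γ : Type*} [Fintype Ω] [DecidableEq α] [DecidableEq γ]
    (p : Ω → ℝ) (A : Ω → α) (C : Ω → γ) : ℝ :=
  ent p (fun ω => (A ω, C ω)) - ent p C

/-- Conditional mutual information `I(A; B | C)`. -/
noncomputable def condMutInfo {Ω α β γ : Type*} [Fintype Ω] [DecidableEq α] [DecidableEq β]
    [DecidableEq γ] (p : Ω → ℝ) (A : Ω → α) (B : Ω → β) (C : Ω → γ) : ℝ :=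
  ent p (fun ω => (A ω, C ω)) + ent p (fun ω => (B ω, C ω))
    - ent p (fun ω => (A ω, B ω, C ω)) - ent p C

/-- `p` is a probability mass function on the finite type `Ω`. -/
def IsPMF {Ω : Type*} [Fintype Ω] (p : Ω → ℝ) : Prop :=
  (∀ ω, 0 ≤ p ω) ∧ ∑ ω, p ω = 1

/-- Extension of a pmf on `{0, …, n}` to an integer-indexed function (zero out of range). -/
noncomputable def extZ {n : ℕ} (f : Fin (n + 1) → ℝ) (k : ℤ) : ℝ :=
  if h : 0 ≤ k ∧ k ≤ (n : ℤ) then f ⟨k.toNat, by omega⟩ else 0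

/-! ### The single-letter quantity `J*` -/

/-- `I(S - X; X)` for independent `X ~ PX` on `{0,…,mx}` and `S ~ θ` on `{0,…,ms}`. -/
noncomputable def iidMI (mx ms : ℕ) (PX : Fin (mx + 1) → ℝ) (θ : Fin (ms + 1) → ℝ) : ℝ :=
  mutInfo (fun ω : Fin (mx + 1) × Fin (ms + 1) => PX ω.1 * θ ω.2)
    (fun ω => ((ω.2 : ℕ) : ℤ) - ((ω.1 : ℕ) : ℤ)) (fun ω => ω.1)

/-- `J* = min over pmfs θ on 𝒮 of I(S - X; X)`. -/
noncomputable def Jstar (mx ms : ℕ) (PX : Fin (mx + 1) → ℝ) : ℝ :=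
  sInf {r : ℝ | ∃ θ : Fin (ms + 1) → ℝ, IsPMF θ ∧ iidMI mx ms PX θ = r}

/-! ### The structured policy `b*` -/

/-- `ξ(w) = Σ_{(x,s) : s - x = w} PX(x) θ(s)`, the pmf of `W = S - X`. -/
noncomputable def xiOf (mx ms : ℕ) (PX : Fin (mx + 1) → ℝ) (θ : Fin (ms + 1) → ℝ)
    (w : ℤ) : ℝ :=
  ∑ x : Fin (mx + 1), ∑ s : Fin (ms + 1),
    if ((s : ℕ) : ℤ) - ((x : ℕ) : ℤ) = w then PX x * θ s else 0

/-- The structured policy with respect to `(θ, ξ)`: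
`b(y|w) = PX(y) θ(y + w) / ξ(w)` for `y ∈ 𝒳 ∩ 𝒴₀(w)` (when `ξ(w) > 0`), else `0`. -/
noncomputable def bstar (mx my ms : ℕ) (PX : Fin (mx + 1) → ℝ) (θ : Fin (ms + 1) → ℝ)
    (w : ℤ) (y : Fin (my + 1)) : ℝ :=
  if xiOf mx ms PX θ w = 0 then 0
  else extZ PX ((y : ℕ) : ℤ) * extZ θ (((y : ℕ) : ℤ) + w) / xiOf mx ms PX θ w

/-! ### Trajectory spaces, policies and induced joint laws.
Time is indexed from `0`; `ω = (s₁, x, y)` records the initial battery state `S₁ = ω.1`,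
the demands `X_{t+1} = ω.2.1 t` and the outputs `Y_{t+1} = ω.2.2 t` for `t = 0, …, T-1`. -/

/-- Trajectories of horizon `T`. -/
abbrev Traj (mx my ms T : ℕ) :=
  Fin (ms + 1) × (Fin T → Fin (mx + 1)) × (Fin T → Fin (my + 1))

variable {mx my ms T : ℕ}

/-- Demand at (0-based) time `t`, as an integer (junk value `0` for `t ≥ T`). -/
def Xat (ω : Traj mx my ms T) (t : ℕ) : ℤ :=
  if h : t < T then ((ω.2.1 ⟨t, h⟩ : ℕ) : ℤ) else 0

/-- Output at (0-based) time `t`, as an integer (junk value `0` for `t ≥ T`). -/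
def Yat (ω : Traj mx my ms T) (t : ℕ) : ℤ :=
  if h : t < T then ((ω.2.2 ⟨t, h⟩ : ℕ) : ℤ) else 0

/-- Battery state at (0-based) time `t`: `S_{t+1} = S_t + Y_t - X_t`, `Sat ω 0 = S₁`. -/
def Sat (ω : Traj mx my ms T) (t : ℕ) : ℤ :=
  ((ω.1 : ℕ) : ℤ) + ∑ i ∈ Finset.range t, (Yat ω i - Xat ω i)

/-- `W_t = S_t - X_t`. -/
def Wat (ω : Traj mx my ms T) (t : ℕ) : ℤ := Sat ω t - Xat ω t

/-- A general causal (class `Q_A`) randomized battery policy: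
`q_t(y_t | x^t, s^t, y^{t-1})`; since `s^t` is determined by `(s₁, x^{t-1}, y^{t-1})`,
the policy is a function of `(x^t, s₁, y^{t-1})`. -/
def PolicyA (mx my ms : ℕ) : Type :=
  (t : ℕ) → (Fin (t + 1) → Fin (mx + 1)) → Fin (ms + 1) → (Fin t → Fin (my + 1)) →
    Fin (my + 1) → ℝ

/-- A class-`Q_B` policy: `q_t(y_t | x_t, s_t, y^{t-1})`. -/
def PolicyB (mx my ms : ℕ) : Type :=
  (t : ℕ) → Fin (mx + 1) → ℤ → (Fin t → Fin (my + 1)) → Fin (my + 1) → ℝ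

/-- The battery state `S_t` computed from `s₁` and the history `(x^t, y^{t-1})`. -/
def hstate {t : ℕ} (s1 : Fin (ms + 1)) (x : Fin (t + 1) → Fin (mx + 1))
    (y : Fin t → Fin (my + 1)) : ℤ :=
  ((s1 : ℕ) : ℤ) + ∑ i : Fin t, (((y i : ℕ) : ℤ) - ((x i.castSucc : ℕ) : ℤ))

/-- Each `q_t(· | x^t, s^t, y^{t-1})` is a pmf on `𝒴`. -/
def CondPMFA (q : PolicyA mx my ms) : Prop :=
  ∀ (t : ℕ) (x : Fin (t + 1) → Fin (mx + 1)) (s1 : Fin (ms + 1)) (y : Fin t → Fin (my + 1)),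
    (∀ yt, 0 ≤ q t x s1 y yt) ∧ ∑ yt, q t x s1 y yt = 1

/-- Feasibility of a class-`Q_A` policy: conditional pmfs supported on
`𝒴₀(s_t - x_t) = {y ∈ 𝒴 : s_t - x_t + y ∈ 𝒮}`. -/
def FeasibleA (q : PolicyA mx my ms) : Prop :=
  CondPMFA q ∧
  ∀ (t : ℕ) (x : Fin (t + 1) → Fin (mx + 1)) (s1 : Fin (ms + 1)) (y : Fin t → Fin (my + 1)),
    ∀ yt, q t x s1 y yt ≠ 0 →
      0 ≤ hstate s1 x y - ((x (Fin.last t) : ℕ) : ℤ) + ((yt : ℕ) : ℤ) ∧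
      hstate s1 x y - ((x (Fin.last t) : ℕ) : ℤ) + ((yt : ℕ) : ℤ) ≤ (ms : ℤ)

/-- Each `q_t(· | x_t, s_t, y^{t-1})` is a pmf on `𝒴`. -/
def CondPMFB (q : PolicyB mx my ms) : Prop :=
  ∀ (t : ℕ) (xt : Fin (mx + 1)) (s : ℤ) (y : Fin t → Fin (my + 1)),
    (∀ yt, 0 ≤ q t xt s y yt) ∧ ∑ yt, q t xt s y yt = 1

/-- Feasibility of a class-`Q_B` policy. -/
def FeasibleB (q : PolicyB mx my ms) : Prop :=
  CondPMFB q ∧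
  ∀ (t : ℕ) (xt : Fin (mx + 1)) (s : ℤ) (y : Fin t → Fin (my + 1)),
    0 ≤ s → s ≤ (ms : ℤ) →
    ∀ yt, q t xt s y yt ≠ 0 →
      0 ≤ s - ((xt : ℕ) : ℤ) + ((yt : ℕ) : ℤ) ∧
      s - ((xt : ℕ) : ℤ) + ((yt : ℕ) : ℤ) ≤ (ms : ℤ)

/-- The demand prefix `x^t = (x_0, …, x_t)` of a trajectory. -/
def prefX (ω : Traj mx my ms T) (t : Fin T) : Fin ((t : ℕ) + 1) → Fin (mx + 1) :=
  fun i => ω.2.1 ⟨(i : ℕ), lt_of_le_of_lt (Nat.lt_succ_iff.mp i.isLt) t.isLt⟩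

/-- The output prefix `y^{t-1} = (y_0, …, y_{t-1})` of a trajectory. -/
def prefY (ω : Traj mx my ms T) (t : Fin T) : Fin (t : ℕ) → Fin (my + 1) :=
  fun i => ω.2.2 ⟨(i : ℕ), i.isLt.trans t.isLt⟩

/-- Joint law on trajectories induced by i.i.d. demand `PX`, initial battery pmf `PS1`
(independent of the demand), and a class-`Q_A` policy `q`. -/
noncomputable def jointA (PS1 : Fin (ms + 1) → ℝ) (PX : Fin (mx + 1) → ℝ)
    (q : PolicyA mx my ms) (T : ℕ) (ω : Traj mx my ms T) : ℝ :=
  PS1 ω.1 * ∏ t : Fin T,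
    (PX (ω.2.1 t) * q (t : ℕ) (prefX ω t) ω.1 (prefY ω t) (ω.2.2 t))

/-- Weight of a demand trajectory under a Markov chain `(PX1, Qm)`. -/
noncomputable def markovWt (PX1 : Fin (mx + 1) → ℝ) (Qm : Fin (mx + 1) → Fin (mx + 1) → ℝ)
    {T : ℕ} (x : Fin T → Fin (mx + 1)) : ℝ :=
  ∏ t : Fin T,
    if _h : (t : ℕ) = 0 then PX1 (x t)
    else Qm (x ⟨(t : ℕ) - 1, lt_of_le_of_lt (Nat.sub_le _ _) t.isLt⟩) (x t)

/-- Joint law on trajectories induced by Markov demand and a class-`Q_A` policy. -/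
noncomputable def jointAMarkov (PS1 : Fin (ms + 1) → ℝ) (PX1 : Fin (mx + 1) → ℝ)
    (Qm : Fin (mx + 1) → Fin (mx + 1) → ℝ) (q : PolicyA mx my ms) (T : ℕ)
    (ω : Traj mx my ms T) : ℝ :=
  PS1 ω.1 * markovWt PX1 Qm ω.2.1 *
    ∏ t : Fin T, q (t : ℕ) (prefX ω t) ω.1 (prefY ω t) (ω.2.2 t)

/-- Joint law on trajectories induced by Markov demand and a class-`Q_B` policy. -/
noncomputable def jointBMarkov (PS1 : Fin (ms + 1) → ℝ) (PX1 : Fin (mx + 1) → ℝ)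
    (Qm : Fin (mx + 1) → Fin (mx + 1) → ℝ) (q : PolicyB mx my ms) (T : ℕ)
    (ω : Traj mx my ms T) : ℝ :=
  PS1 ω.1 * markovWt PX1 Qm ω.2.1 *
    ∏ t : Fin T, q (t : ℕ) (ω.2.1 t) (Sat ω (t : ℕ)) (prefY ω t) (ω.2.2 t)

/-- The memoryless time-invariant policy `q_t(y | x, s) = b*(y | s - x)`, as a member of the
class of general causal policies. -/
noncomputable def structuredPolicyA (mx my ms : ℕ) (PX : Fin (mx + 1) → ℝ)
    (θ : Fin (ms + 1) → ℝ) : PolicyA mx my ms :=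
  fun t x s1 y yt => bstar mx my ms PX θ (hstate s1 x y - ((x (Fin.last t) : ℕ) : ℤ)) yt



section lemmas
variable {Ω α β γ δ : Type*} [Fintype Ω] {p : Ω → ℝ}

lemma pr_nonneg [DecidableEq α] (hp : ∀ ω, 0 ≤ p ω) (Z : Ω → α) (z : α) :
    0 ≤ pr p Z z :=
  Finset.sum_nonneg fun ω _ => hp ω

lemma le_pr [DecidableEq α] (hp : ∀ ω, 0 ≤ p ω) (Z : Ω → α) (ω : Ω) :
    p ω ≤ pr p Z (Z ω) := by
  apply Finset.single_le_sum (fun ω _ => hp ω)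
  simp

lemma pr_mono [DecidableEq α] [DecidableEq β] (hp : ∀ ω, 0 ≤ p ω) {Z : Ω → α} {W : Ω → β}
    (h : ∀ ω ω', Z ω' = Z ω → W ω' = W ω) (ω : Ω) :
    pr p Z (Z ω) ≤ pr p W (W ω) := by
  apply Finset.sum_le_sum_of_subset_of_nonneg
  · intro ω' hω'
    simp only [Finset.mem_filter, Finset.mem_univ, true_and] at *
    exact h ω ω' hω'
  · exact fun i _ _ => hp i

/-- entropy as a sum over sample points -/
lemma ent_eq_sum_omega [DecidableEq α] (p : Ω → ℝ) (Z : Ω → α) :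
    ent p Z = -∑ ω, p ω * Real.logb 2 (pr p Z (Z ω)) := by
  unfold ent
  congr 1
  rw [← Finset.sum_fiberwise_of_maps_to (g := Z) (t := Finset.univ.image Z)
      (fun ω _ => Finset.mem_image_of_mem Z (Finset.mem_univ ω))]
  refine Finset.sum_congr rfl fun z _ => ?_
  rw [pr, Finset.sum_mul]
  refine Finset.sum_congr rfl fun ω hω => ?_
  simp only [Finset.mem_filter] at hω
  rw [hω.2, pr]

/-- entropy is invariant under relabeling by mutually-determining codes -/
lemma ent_congr [DecidableEq α] [DecidableEq β] {Z : Ω → α} {Z' : Ω → β}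
    (F : α → β) (G : β → α) (hF : ∀ ω, F (Z ω) = Z' ω) (hG : ∀ ω, G (Z' ω) = Z ω) :
    ent p Z' = ent p Z := by
  rw [ent_eq_sum_omega, ent_eq_sum_omega]
  congr 1
  refine Finset.sum_congr rfl fun ω _ => ?_
  have : pr p Z' (Z' ω) = pr p Z (Z ω) := by
    unfold pr
    refine Finset.sum_congr ?_ fun _ _ => rfl
    ext ω'
    simp only [Finset.mem_filter, Finset.mem_univ, true_and]
    constructor
    · intro h; rw [← hG ω', h, hG ω]
    · intro h; rw [← hF ω', h, hF ω]
  rw [this]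




/-- sum over distinct a of `pr (A,C) (a,c)` is at most `pr C c` -/
lemma sum_pr_fst_le [DecidableEq α] [DecidableEq γ] (hp : ∀ ω, 0 ≤ p ω)
    (A : Ω → α) (C : Ω → γ) (c : γ) (F : Finset α) :
    ∑ a ∈ F, pr p (fun ω => (A ω, C ω)) (a, c) ≤ pr p C c := by
  classical
  set s := Finset.univ.filter (fun ω => C ω = c ∧ A ω ∈ F) with hs
  have h1 : ∑ a ∈ F, pr p (fun ω => (A ω, C ω)) (a, c) = ∑ ω ∈ s, p ω := by
    rw [← Finset.sum_fiberwise_of_maps_to (g := A) (t := F)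
        (fun ω hω => by simp only [hs, Finset.mem_filter] at hω; exact hω.2.2) p]
    refine Finset.sum_congr rfl fun a ha => ?_
    unfold pr
    refine Finset.sum_congr ?_ fun _ _ => rfl
    ext ω
    simp only [hs, Finset.mem_filter, Finset.mem_univ, true_and, Prod.mk.injEq]
    constructor
    · rintro ⟨hA, hC⟩; exact ⟨⟨hC, hA ▸ ha⟩, hA⟩
    · rintro ⟨⟨hC, _⟩, hA⟩; exact ⟨hA, hC⟩
  rw [h1]
  apply Finset.sum_le_sum_of_subset_of_nonneg
  · intro ω hω
    simp only [hs, Finset.mem_filter, Finset.mem_univ, true_and] at *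
    exact hω.1
  · exact fun i _ _ => hp i

lemma pr_pair_le [DecidableEq α] [DecidableEq γ] (hp : ∀ ω, 0 ≤ p ω)
    (A : Ω → α) (C : Ω → γ) (a : α) (c : γ) :
    pr p (fun ω => (A ω, C ω)) (a, c) ≤ pr p C c := by
  apply Finset.sum_le_sum_of_subset_of_nonneg
  · intro ω hω
    simp only [Finset.mem_filter, Finset.mem_univ, true_and, Prod.mk.injEq] at *
    exact hω.2
  · exact fun i _ _ => hp i

/-- key bound: `∑_{z ∈ image Z} pr(AC) * pr(BC) / pr(C) ≤ 1` with `Z = (A,B,C)` -/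
lemma sum_ratio_le_one [DecidableEq α] [DecidableEq β] [DecidableEq γ]
    (hp : ∀ ω, 0 ≤ p ω) (hps : ∑ ω, p ω = 1)
    (A : Ω → α) (B : Ω → β) (C : Ω → γ) :
    ∑ z ∈ Finset.univ.image (fun ω => (A ω, B ω, C ω)),
      pr p (fun ω => (A ω, C ω)) (z.1, z.2.2) * pr p (fun ω => (B ω, C ω)) (z.2.1, z.2.2)
        / pr p C z.2.2 ≤ 1 := by
  classical
  set Z := fun ω => (A ω, B ω, C ω) with hZ
  set R' := fun z : α × β × γ =>
    pr p (fun ω => (A ω, C ω)) (z.1, z.2.2) * pr p (fun ω => (B ω, C ω)) (z.2.1, z.2.2)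
      / pr p C z.2.2 with hR'
  have hgroup : ∑ z ∈ Finset.univ.image Z, R' z
      = ∑ c ∈ Finset.univ.image C,
          ∑ z ∈ (Finset.univ.image Z).filter (fun z => z.2.2 = c), R' z := by
    refine (Finset.sum_fiberwise_of_maps_to (g := fun z => z.2.2)
      (t := Finset.univ.image C) ?_ R').symm
    intro z hz
    simp only [Finset.mem_image, Finset.mem_univ, true_and] at hz ⊢
    obtain ⟨ω, hω⟩ := hz
    exact ⟨ω, by rw [← hω]⟩
  rw [hgroup]
  have hinner : ∀ c ∈ Finset.univ.image C,
      ∑ z ∈ (Finset.univ.image Z).filter (fun z => z.2.2 = c), R' z ≤ pr p C c := by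
    intro c _
    set Fc := (Finset.univ.image Z).filter (fun z => z.2.2 = c) with hFc
    have hstep : ∑ z ∈ Fc, R' z
        = (∑ z ∈ Fc, pr p (fun ω => (A ω, C ω)) (z.1, c)
            * pr p (fun ω => (B ω, C ω)) (z.2.1, c)) / pr p C c := by
      rw [Finset.sum_div]
      refine Finset.sum_congr rfl fun z hz => ?_
      simp only [hFc, Finset.mem_filter] at hz
      simp only [hR', hz.2]
    rw [hstep]
    -- bound numerator by (∑ f)(∑ g)
    set f := fun a => pr p (fun ω => (A ω, C ω)) (a, c)
    set g := fun b => pr p (fun ω => (B ω, C ω)) (b, c)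
    have hnum : ∑ z ∈ Fc, f z.1 * g z.2.1
        ≤ (∑ a ∈ Fc.image (fun z => z.1), f a) * (∑ b ∈ Fc.image (fun z => z.2.1), g b) := by
      have himg : ∑ z ∈ Fc, f z.1 * g z.2.1
          = ∑ w ∈ Fc.image (fun z : α × β × γ => (z.1, z.2.1)), f w.1 * g w.2 := by
        rw [Finset.sum_image]
        intro z hz z' hz' he
        simp only [Finset.mem_coe, hFc, Finset.mem_filter] at hz hz'
        simp only [Prod.mk.injEq] at he
        refine Prod.ext he.1 (Prod.ext he.2 ?_)
        rw [hz.2, hz'.2]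
      rw [himg]
      calc ∑ w ∈ Fc.image (fun z : α × β × γ => (z.1, z.2.1)), f w.1 * g w.2
          ≤ ∑ w ∈ (Fc.image (fun z => z.1)) ×ˢ (Fc.image (fun z => z.2.1)),
              f w.1 * g w.2 := by
            apply Finset.sum_le_sum_of_subset_of_nonneg
            · intro w hw
              simp only [Finset.mem_image, Finset.mem_product] at hw ⊢
              obtain ⟨z, hz, hzw⟩ := hw
              exact ⟨⟨z, hz, by rw [← hzw]⟩, ⟨z, hz, by rw [← hzw]⟩⟩
            · intro w _ _
              exact mul_nonneg (pr_nonneg hp _ _) (pr_nonneg hp _ _)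
        _ = (∑ a ∈ Fc.image (fun z => z.1), f a) * (∑ b ∈ Fc.image (fun z => z.2.1), g b) := by
            rw [Finset.sum_product, Finset.sum_mul_sum]
    have hfa : ∑ a ∈ Fc.image (fun z => z.1), f a ≤ pr p C c :=
      sum_pr_fst_le hp A C c _
    have hgb : ∑ b ∈ Fc.image (fun z => z.2.1), g b ≤ pr p C c :=
      sum_pr_fst_le hp B C c _
    by_cases hqc : pr p C c = 0
    · have hf0 : ∀ a ∈ Fc.image (fun z => z.1), f a = 0 := by
        intro a _
        have := pr_pair_le hp A C a c
        have := pr_nonneg hp (fun ω => (A ω, C ω)) (a, c)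
        simp only [f]; linarith [hqc ▸ pr_pair_le hp A C a c]
      have : ∑ z ∈ Fc, f z.1 * g z.2.1 = 0 := by
        apply Finset.sum_eq_zero
        intro z hz
        rw [hf0 z.1 (Finset.mem_image_of_mem _ hz), zero_mul]
      rw [this, zero_div]
      exact pr_nonneg hp C c
    · have hqcpos : 0 < pr p C c := lt_of_le_of_ne (pr_nonneg hp C c) (Ne.symm hqc)
      rw [div_le_iff₀ hqcpos]
      calc ∑ z ∈ Fc, f z.1 * g z.2.1
          ≤ (∑ a ∈ Fc.image (fun z => z.1), f a) * (∑ b ∈ Fc.image (fun z => z.2.1), g b) := hnum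
        _ ≤ pr p C c * pr p C c := by
            apply mul_le_mul hfa hgb (Finset.sum_nonneg fun b _ => pr_nonneg hp _ _)
              (pr_nonneg hp C c)
  calc ∑ c ∈ Finset.univ.image C,
        ∑ z ∈ (Finset.univ.image Z).filter (fun z => z.2.2 = c), R' z
      ≤ ∑ c ∈ Finset.univ.image C, pr p C c := Finset.sum_le_sum hinner
    _ = ∑ ω, p ω := by
        rw [← Finset.sum_fiberwise_of_maps_to (g := C) (t := Finset.univ.image C)
            (fun ω _ => Finset.mem_image_of_mem C (Finset.mem_univ ω)) p]
        rfl
    _ = 1 := hps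

end lemmas

section nonneg
variable {Ω α β γ : Type*} [Fintype Ω] {p : Ω → ℝ}

lemma condMutInfo_nonneg [DecidableEq α] [DecidableEq β] [DecidableEq γ]
    (hp : ∀ ω, 0 ≤ p ω) (hps : ∑ ω, p ω = 1)
    (A : Ω → α) (B : Ω → β) (C : Ω → γ) :
    0 ≤ condMutInfo p A B C := by
  classical
  set Z := fun ω => (A ω, B ω, C ω) with hZ
  set AC := fun ω => (A ω, C ω) with hAC
  set BC := fun ω => (B ω, C ω) with hBC
  have expand : condMutInfo p A B C = ∑ ω, p ω *
      (Real.logb 2 (pr p Z (Z ω)) + Real.logb 2 (pr p C (C ω))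
        - Real.logb 2 (pr p AC (AC ω)) - Real.logb 2 (pr p BC (BC ω))) := by
    simp only [condMutInfo, ent_eq_sum_omega, mul_add, mul_sub,
      Finset.sum_add_distrib, Finset.sum_sub_distrib]
    ring
  set R : α × β × γ → ℝ := fun z =>
    pr p AC (z.1, z.2.2) * pr p BC (z.2.1, z.2.2) / (pr p Z z * pr p C z.2.2) with hR
  -- termwise bound
  have hterm : ∀ ω ∈ Finset.univ, p ω * (1 - R (Z ω)) / Real.log 2 ≤ p ω *
      (Real.logb 2 (pr p Z (Z ω)) + Real.logb 2 (pr p C (C ω))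
        - Real.logb 2 (pr p AC (AC ω)) - Real.logb 2 (pr p BC (BC ω))) := by
    intro ω _
    rcases eq_or_lt_of_le (hp ω) with h0 | hpos
    · simp [← h0]
    have h3 : 0 < pr p Z (Z ω) := lt_of_lt_of_le hpos (le_pr hp Z ω)
    have hacm : pr p Z (Z ω) ≤ pr p AC (AC ω) := by
      refine pr_mono hp (fun ω ω' h => ?_) ω
      simp only [hZ, Prod.mk.injEq] at h
      simp only [hAC, Prod.mk.injEq]
      exact ⟨h.1, h.2.2⟩
    have hbcm : pr p Z (Z ω) ≤ pr p BC (BC ω) := by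
      refine pr_mono hp (fun ω ω' h => ?_) ω
      simp only [hZ, Prod.mk.injEq] at h
      simp only [hBC, Prod.mk.injEq]
      exact ⟨h.2.1, h.2.2⟩
    have hcm : pr p Z (Z ω) ≤ pr p C (C ω) := by
      refine pr_mono hp (fun ω ω' h => ?_) ω
      simp only [hZ, Prod.mk.injEq] at h
      exact h.2.2
    have hac : 0 < pr p AC (AC ω) := lt_of_lt_of_le h3 hacm
    have hbc : 0 < pr p BC (BC ω) := lt_of_lt_of_le h3 hbcm
    have hc : 0 < pr p C (C ω) := lt_of_lt_of_le h3 hcm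
    have hratpos : 0 < R (Z ω) := by
      simp only [hR]
      exact div_pos (mul_pos hac hbc) (mul_pos h3 hc)
    have hlog : Real.log (R (Z ω)) ≤ R (Z ω) - 1 := Real.log_le_sub_one_of_pos hratpos
    have hlogR : Real.log (R (Z ω)) =
        Real.log (pr p AC (AC ω)) + Real.log (pr p BC (BC ω))
          - (Real.log (pr p Z (Z ω)) + Real.log (pr p C (C ω))) := by
      simp only [hR]
      rw [Real.log_div (by positivity) (by positivity), Real.log_mul hac.ne' hbc.ne',
        Real.log_mul h3.ne' hc.ne']
    have hnum : 1 - R (Z ω) ≤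
        Real.log (pr p Z (Z ω)) + Real.log (pr p C (C ω))
          - Real.log (pr p AC (AC ω)) - Real.log (pr p BC (BC ω)) := by
      linarith
    have hlog2 : (0:ℝ) < Real.log 2 := Real.log_pos (by norm_num)
    have heq : p ω *
        (Real.logb 2 (pr p Z (Z ω)) + Real.logb 2 (pr p C (C ω))
          - Real.logb 2 (pr p AC (AC ω)) - Real.logb 2 (pr p BC (BC ω)))
        = p ω * (Real.log (pr p Z (Z ω)) + Real.log (pr p C (C ω))
            - Real.log (pr p AC (AC ω)) - Real.log (pr p BC (BC ω))) / Real.log 2 := by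
      simp only [Real.logb]
      ring
    rw [heq]
    exact div_le_div_of_nonneg_right (mul_le_mul_of_nonneg_left hnum (hp ω)) hlog2.le
  -- the ratio sum is at most 1
  have hratsum : ∑ ω, p ω * R (Z ω) ≤ 1 := by
    have hgroup : ∑ ω, p ω * R (Z ω)
        = ∑ z ∈ Finset.univ.image Z, pr p Z z * R z := by
      rw [← Finset.sum_fiberwise_of_maps_to (g := Z) (t := Finset.univ.image Z)
          (fun ω _ => Finset.mem_image_of_mem Z (Finset.mem_univ ω))
          (fun ω => p ω * R (Z ω))]
      refine Finset.sum_congr rfl fun z _ => ?_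
      rw [pr, Finset.sum_mul]
      refine Finset.sum_congr rfl fun ω hω => ?_
      simp only [Finset.mem_filter] at hω
      rw [hω.2]
    rw [hgroup]
    have hz_le : ∀ z ∈ Finset.univ.image Z, pr p Z z * R z ≤
        pr p AC (z.1, z.2.2) * pr p BC (z.2.1, z.2.2) / pr p C z.2.2 := by
      intro z _
      by_cases h0 : pr p Z z = 0
      · rw [h0, zero_mul]
        exact div_nonneg (mul_nonneg (pr_nonneg hp _ _) (pr_nonneg hp _ _)) (pr_nonneg hp _ _)
      · simp only [hR]
        rw [← mul_div_assoc, mul_div_mul_left _ _ h0]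
    calc ∑ z ∈ Finset.univ.image Z, pr p Z z * R z
        ≤ ∑ z ∈ Finset.univ.image Z,
            pr p AC (z.1, z.2.2) * pr p BC (z.2.1, z.2.2) / pr p C z.2.2 :=
          Finset.sum_le_sum hz_le
      _ ≤ 1 := sum_ratio_le_one hp hps A B C
  have hlog2 : (0:ℝ) < Real.log 2 := Real.log_pos (by norm_num)
  calc (0:ℝ) ≤ (∑ ω, p ω * (1 - R (Z ω))) / Real.log 2 := by
        apply div_nonneg ?_ hlog2.le
        have : ∑ ω, p ω * (1 - R (Z ω)) = (∑ ω, p ω) - ∑ ω, p ω * R (Z ω) := by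
          simp only [mul_sub, mul_one, Finset.sum_sub_distrib]
        rw [this, hps]
        linarith
    _ = ∑ ω, p ω * (1 - R (Z ω)) / Real.log 2 := by rw [Finset.sum_div]
    _ ≤ ∑ ω, p ω *
        (Real.logb 2 (pr p Z (Z ω)) + Real.logb 2 (pr p C (C ω))
          - Real.logb 2 (pr p AC (AC ω)) - Real.logb 2 (pr p BC (BC ω))) :=
        Finset.sum_le_sum hterm
    _ = condMutInfo p A B C := expand.symm

end nonneg

section MoreInfo
variable {Ω α β γ δ : Type*} [Fintype Ω] {p : Ω → ℝ}

lemma ent_const [DecidableEq α] (hps : ∑ ω, p ω = 1) (c : α) :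
    ent p (fun _ => c) = 0 := by
  cases isEmpty_or_nonempty Ω with
  | inl h => rw [Finset.univ_eq_empty, Finset.sum_empty] at hps; norm_num at hps
  | inr h =>
    have himg : (Finset.univ.image (fun _ : Ω => c)) = {c} :=
      Finset.image_const Finset.univ_nonempty c
    have hpr : pr p (fun _ : Ω => c) c = 1 := by
      unfold pr
      rw [Finset.filter_true_of_mem (fun ω _ => rfl)]
      exact hps
    unfold ent
    rw [himg, Finset.sum_singleton, hpr, Real.logb_one, mul_zero, neg_zero]

/-- Data-processing: if `B = f(A, C)` then `I(B; Y | C) ≤ I(A; Y | C)`. -/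
lemma condMutInfo_comp_le [DecidableEq α] [DecidableEq β] [DecidableEq γ] [DecidableEq δ]
    (hp : ∀ ω, 0 ≤ p ω) (hps : ∑ ω, p ω = 1)
    (A : Ω → α) (Y : Ω → β) (C : Ω → γ) (f : α → γ → δ) :
    condMutInfo p (fun ω => f (A ω) (C ω)) Y C ≤ condMutInfo p A Y C := by
  set B := fun ω => f (A ω) (C ω) with hB
  have q1 : ent p (fun ω => (A ω, B ω, C ω)) = ent p (fun ω => (A ω, C ω)) :=
    ent_congr (fun w : α × γ => (w.1, f w.1 w.2, w.2)) (fun w : α × δ × γ => (w.1, w.2.2))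
      (fun ω => rfl) (fun ω => rfl)
  have q2 : ent p (fun ω => (A ω, Y ω, B ω, C ω)) = ent p (fun ω => (A ω, Y ω, C ω)) :=
    ent_congr (fun w : α × β × γ => (w.1, w.2.1, f w.1 w.2.2, w.2.2))
      (fun w : α × β × δ × γ => (w.1, w.2.1, w.2.2.2))
      (fun ω => rfl) (fun ω => rfl)
  have q3 : ent p (fun ω => (Y ω, B ω, C ω)) = ent p (fun ω => (B ω, Y ω, C ω)) :=
    ent_congr (fun w : δ × β × γ => (w.2.1, w.1, w.2.2))
      (fun w : β × δ × γ => (w.2.1, w.1, w.2.2))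
      (fun ω => rfl) (fun ω => rfl)
  have h0 := condMutInfo_nonneg hp hps A Y (fun ω => (B ω, C ω))
  simp only [condMutInfo] at h0 ⊢
  rw [q1, q2, q3] at h0
  linarith

end MoreInfo


lemma sum_prod_pref {β : Type*} [Fintype β] :
    ∀ (T : ℕ) (g : (t : ℕ) → (Fin t → β) → β → ℝ),
      (∀ t yp, ∑ b, g t yp b = 1) →
      ∑ y : Fin T → β, ∏ t : Fin T,
        g (t : ℕ) (fun i : Fin (t : ℕ) => y ⟨(i : ℕ), lt_trans i.isLt t.isLt⟩) (y t) = 1 := by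
  intro T
  induction T with
  | zero =>
      intro g hg
      simp
  | succ T ih =>
      intro g hg
      rw [← Equiv.sum_comp (Fin.snocEquiv (fun _ => β))]
      rw [Fintype.sum_prod_type]
      have key : ∀ (x : β) (yp : Fin T → β),
          ∏ t : Fin (T+1), g (t : ℕ)
            (fun i : Fin (t : ℕ) => (Fin.snocEquiv (fun _ => β)) (x, yp) ⟨(i : ℕ), lt_trans i.isLt t.isLt⟩)
            ((Fin.snocEquiv (fun _ => β)) (x, yp) t)
          = (∏ t : Fin T, g (t : ℕ)
              (fun i : Fin (t : ℕ) => yp ⟨(i : ℕ), lt_trans i.isLt t.isLt⟩) (yp t))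
            * g T (fun i : Fin T => yp ⟨(i : ℕ), i.isLt⟩) x := by
        intro x yp
        rw [Fin.prod_univ_castSucc]
        congr 1
        · refine Finset.prod_congr rfl fun t _ => ?_
          congr 1
          · funext i
            have : (⟨(i : ℕ), lt_trans i.isLt (Fin.castSucc t).isLt⟩ : Fin (T+1))
                = Fin.castSucc ⟨(i : ℕ), lt_trans i.isLt t.isLt⟩ := rfl
            rw [this]
            exact Fin.snoc_castSucc (α := fun _ => β) ..
          · exact Fin.snoc_castSucc (α := fun _ => β) ..
        · congr 1
          · funext i
            have : (⟨(i : ℕ), lt_trans i.isLt (Fin.last T).isLt⟩ : Fin (T+1))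
                = Fin.castSucc ⟨(i : ℕ), i.isLt⟩ := rfl
            rw [this]
            exact Fin.snoc_castSucc (α := fun _ => β) ..
          · exact Fin.snoc_last (α := fun _ => β) ..
      calc ∑ x : β, ∑ yp : Fin T → β, ∏ t : Fin (T+1), g (t : ℕ)
            (fun i : Fin (t : ℕ) => (Fin.snocEquiv (fun _ => β)) (x, yp) ⟨(i : ℕ), lt_trans i.isLt t.isLt⟩)
            ((Fin.snocEquiv (fun _ => β)) (x, yp) t)
          = ∑ x : β, ∑ yp : Fin T → β,
            (∏ t : Fin T, g (t : ℕ)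
              (fun i : Fin (t : ℕ) => yp ⟨(i : ℕ), lt_trans i.isLt t.isLt⟩) (yp t))
            * g T (fun i : Fin T => yp ⟨(i : ℕ), i.isLt⟩) x := by
            exact Finset.sum_congr rfl fun x _ => Finset.sum_congr rfl fun yp _ => key x yp
        _ = ∑ yp : Fin T → β,
            (∏ t : Fin T, g (t : ℕ)
              (fun i : Fin (t : ℕ) => yp ⟨(i : ℕ), lt_trans i.isLt t.isLt⟩) (yp t))
            * ∑ x : β, g T (fun i : Fin T => yp ⟨(i : ℕ), i.isLt⟩) x := by
            rw [Finset.sum_comm]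
            exact Finset.sum_congr rfl fun yp _ => by rw [Finset.mul_sum]
        _ = 1 := by
            simp only [hg, mul_one]
            exact ih g hg





lemma sum_markovWt (PX1 : Fin (mx + 1) → ℝ) (Qm : Fin (mx + 1) → Fin (mx + 1) → ℝ)
    (hPX1 : IsPMF PX1) (hQm : ∀ x, IsPMF (Qm x)) (n : ℕ) :
    ∑ x : Fin n → Fin (mx + 1), markovWt PX1 Qm x = 1 := by
  set gM : (t : ℕ) → (Fin t → Fin (mx + 1)) → Fin (mx + 1) → ℝ := fun t xp xt =>
    if h : t = 0 then PX1 xt else Qm (xp ⟨t - 1, by omega⟩) xt with hgM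
  have hsum : ∀ t xp, ∑ b, gM t xp b = 1 := by
    intro t xp
    by_cases h : t = 0 <;> simp [hgM, h, hPX1.2, (hQm _).2]
  have heq : ∀ x : Fin n → Fin (mx + 1), markovWt PX1 Qm x
      = ∏ t : Fin n, gM (t : ℕ)
          (fun i : Fin (t : ℕ) => x ⟨(i : ℕ), lt_trans i.isLt t.isLt⟩) (x t) := by
    intro x
    unfold markovWt
    refine Finset.prod_congr rfl fun t _ => ?_
    by_cases h : (t : ℕ) = 0
    · rw [dif_pos h]; simp only [hgM]; rw [dif_pos h]
    · rw [dif_neg h]; simp only [hgM]; rw [dif_neg h]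
  rw [Finset.sum_congr rfl (fun x _ => heq x)]
  exact sum_prod_pref n gM hsum

lemma sum_policy {n : ℕ} (q : PolicyA mx my ms) (hq : CondPMFA q)
    (s1 : Fin (ms + 1)) (x : Fin n → Fin (mx + 1)) :
    ∑ y : Fin n → Fin (my + 1), ∏ t : Fin n,
      q (t : ℕ) (prefX ((s1, x, y) : Traj mx my ms n) t) s1
        (prefY ((s1, x, y) : Traj mx my ms n) t) (y t) = 1 := by
  set gq : (t : ℕ) → (Fin t → Fin (my + 1)) → Fin (my + 1) → ℝ := fun t yp yt =>
    if h : t < n then q t (fun i : Fin (t + 1) => x ⟨(i : ℕ), by omega⟩) s1 yp yt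
    else if yt = 0 then 1 else 0 with hgq
  have hsum : ∀ t yp, ∑ b, gq t yp b = 1 := by
    intro t yp
    by_cases h : t < n
    · simp only [hgq, dif_pos h]
      exact (hq t _ s1 yp).2
    · simp [hgq, dif_neg h]
  have heq : ∀ y : Fin n → Fin (my + 1),
      (∏ t : Fin n, q (t : ℕ) (prefX ((s1, x, y) : Traj mx my ms n) t) s1
        (prefY ((s1, x, y) : Traj mx my ms n) t) (y t))
      = ∏ t : Fin n, gq (t : ℕ)
          (fun i : Fin (t : ℕ) => y ⟨(i : ℕ), lt_trans i.isLt t.isLt⟩) (y t) := by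
    intro y
    refine Finset.prod_congr rfl fun t _ => ?_
    simp only [hgq]
    rw [dif_pos t.isLt]
    rfl
  rw [Finset.sum_congr rfl (fun y _ => heq y)]
  exact sum_prod_pref n gq hsum

lemma jointAMarkov_nonneg (PS1 : Fin (ms + 1) → ℝ) (PX1 : Fin (mx + 1) → ℝ)
    (Qm : Fin (mx + 1) → Fin (mx + 1) → ℝ) (q : PolicyA mx my ms) (n : ℕ)
    (hPS1 : IsPMF PS1) (hPX1 : IsPMF PX1) (hQm : ∀ x, IsPMF (Qm x)) (hq : CondPMFA q)
    (ω : Traj mx my ms n) : 0 ≤ jointAMarkov PS1 PX1 Qm q n ω := by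
  unfold jointAMarkov markovWt
  apply mul_nonneg (mul_nonneg (hPS1.1 _) ?_) ?_
  · apply Finset.prod_nonneg
    intro t _
    by_cases h : (t : ℕ) = 0
    · rw [dif_pos h]; exact hPX1.1 _
    · rw [dif_neg h]; exact (hQm _).1 _
  · exact Finset.prod_nonneg fun t _ => (hq _ _ _ _).1 _

lemma jointAMarkov_sum (PS1 : Fin (ms + 1) → ℝ) (PX1 : Fin (mx + 1) → ℝ)
    (Qm : Fin (mx + 1) → Fin (mx + 1) → ℝ) (q : PolicyA mx my ms) (n : ℕ)
    (hPS1 : IsPMF PS1) (hPX1 : IsPMF PX1) (hQm : ∀ x, IsPMF (Qm x)) (hq : CondPMFA q) :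
    ∑ ω : Traj mx my ms n, jointAMarkov PS1 PX1 Qm q n ω = 1 := by
  rw [Fintype.sum_prod_type]
  have h1 : ∀ s1 : Fin (ms + 1),
      ∑ v : (Fin n → Fin (mx + 1)) × (Fin n → Fin (my + 1)),
        jointAMarkov PS1 PX1 Qm q n (s1, v) = PS1 s1 := by
    intro s1
    rw [Fintype.sum_prod_type]
    have h2 : ∀ x : Fin n → Fin (mx + 1),
        ∑ y : Fin n → Fin (my + 1), jointAMarkov PS1 PX1 Qm q n (s1, x, y)
          = PS1 s1 * markovWt PX1 Qm x := by
      intro x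
      have hrfl : ∀ y, jointAMarkov PS1 PX1 Qm q n (s1, x, y)
          = PS1 s1 * markovWt PX1 Qm x * ∏ t : Fin n,
              q (t : ℕ) (prefX ((s1, x, y) : Traj mx my ms n) t) s1
                (prefY ((s1, x, y) : Traj mx my ms n) t) (y t) := fun y => rfl
      rw [Finset.sum_congr rfl fun y _ => hrfl y, ← Finset.mul_sum,
        sum_policy q hq s1 x, mul_one]
    rw [Finset.sum_congr rfl (fun x _ => h2 x), ← Finset.mul_sum,
      sum_markovWt PX1 Qm hPX1 hQm n, mul_one]
  rw [Finset.sum_congr rfl (fun s1 _ => h1 s1)]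
  exact hPS1.2


/-- For Markov demand, an independent initial battery state, battery
dynamics `S_{t+1} = S_t + Y_t - X_t`, and any causal policy:
`I(S₁, X^T; Y^T) ≥ Σ_{t=1}^T I(X_t, S_t; Y_t | Y^{t-1})`. -/
theorem leakage_ge_sum_condMutInfo (mx my ms T : ℕ) (hxy : mx ≤ my)
    (PX1 : Fin (mx + 1) → ℝ) (hPX1 : IsPMF PX1)
    (Qm : Fin (mx + 1) → Fin (mx + 1) → ℝ) (hQm : ∀ x, IsPMF (Qm x))
    (PS1 : Fin (ms + 1) → ℝ) (hPS1 : IsPMF PS1)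
    (q : PolicyA mx my ms) (hq : CondPMFA q) :
    ∑ t ∈ Finset.range T,
        condMutInfo (jointAMarkov PS1 PX1 Qm q T)
          (fun ω => (Xat ω t, Sat ω t)) (fun ω => Yat ω t)
          (fun ω => fun i : Fin t => Yat ω (i : ℕ))
      ≤ mutInfo (jointAMarkov PS1 PX1 Qm q T)
          (fun ω => (ω.1, ω.2.1)) (fun ω => ω.2.2) := by
  classical
  set p := jointAMarkov PS1 PX1 Qm q T with hjp
  have hp : ∀ ω, 0 ≤ p ω := jointAMarkov_nonneg PS1 PX1 Qm q T hPS1 hPX1 hQm hq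
  have hps : ∑ ω, p ω = 1 := jointAMarkov_sum PS1 PX1 Qm q T hPS1 hPX1 hQm hq
  set A : Traj mx my ms T → Fin (ms + 1) × (Fin T → Fin (mx + 1)) :=
    fun ω => (ω.1, ω.2.1) with hA
  set Gf : ℕ → ℝ := fun k =>
    ent p (fun ω : Traj mx my ms T => (A ω, fun i : Fin k => Yat ω (i : ℕ))) with hGf
  set Ff : ℕ → ℝ := fun k =>
    ent p (fun ω : Traj mx my ms T => fun i : Fin k => Yat ω (i : ℕ)) with hFf
  have step1 : ∀ t ∈ Finset.range T,
      condMutInfo p (fun ω => (Xat ω t, Sat ω t)) (fun ω => Yat ω t)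
          (fun ω => fun i : Fin t => Yat ω (i : ℕ))
        ≤ condMutInfo p A (fun ω => Yat ω t)
          (fun ω => fun i : Fin t => Yat ω (i : ℕ)) := by
    intro t _
    have hfe : (fun ω : Traj mx my ms T => (Xat ω t, Sat ω t))
        = fun ω => ((fun (a : Fin (ms + 1) × (Fin T → Fin (mx + 1))) (yp : Fin t → ℤ) =>
            ((if h : t < T then ((a.2 ⟨t, h⟩ : ℕ) : ℤ) else 0),
              ((a.1 : ℕ) : ℤ) + ∑ i : Fin t,
                (yp i - (if h : (i : ℕ) < T then ((a.2 ⟨(i : ℕ), h⟩ : ℕ) : ℤ) else 0))))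
            (A ω) (fun i : Fin t => Yat ω (i : ℕ))) := by
      funext ω
      refine Prod.ext rfl ?_
      show Sat ω t = _
      unfold Sat
      rw [← Fin.sum_univ_eq_sum_range (fun i => Yat ω i - Xat ω i) t]
      rfl
    rw [hfe]
    exact condMutInfo_comp_le hp hps A (fun ω => Yat ω t)
      (fun ω => fun i : Fin t => Yat ω (i : ℕ))
      (fun (a : Fin (ms + 1) × (Fin T → Fin (mx + 1))) (yp : Fin t → ℤ) =>
        ((if h : t < T then ((a.2 ⟨t, h⟩ : ℕ) : ℤ) else 0),
          ((a.1 : ℕ) : ℤ) + ∑ i : Fin t,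
            (yp i - (if h : (i : ℕ) < T then ((a.2 ⟨(i : ℕ), h⟩ : ℕ) : ℤ) else 0))))
  have chain : ∀ t : ℕ,
      condMutInfo p A (fun ω => Yat ω t) (fun ω => fun i : Fin t => Yat ω (i : ℕ))
        = (Gf t - Gf (t + 1)) + (Ff (t + 1) - Ff t) := by
    intro t
    have eY : ent p (fun ω : Traj mx my ms T => (Yat ω t, fun i : Fin t => Yat ω (i : ℕ)))
        = ent p (fun ω : Traj mx my ms T => fun i : Fin (t + 1) => Yat ω (i : ℕ)) := by
      refine ent_congr
        (fun v : Fin (t + 1) → ℤ => (v (Fin.last t), fun i : Fin t => v i.castSucc))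
        (fun w : ℤ × (Fin t → ℤ) => Fin.snoc w.2 w.1) (fun ω => rfl) (fun ω => ?_)
      funext i
      refine Fin.lastCases ?_ (fun j => ?_) i
      · exact Fin.snoc_last (α := fun _ => ℤ) ..
      · exact Fin.snoc_castSucc (α := fun _ => ℤ) ..
    have eAY : ent p (fun ω : Traj mx my ms T =>
          (A ω, Yat ω t, fun i : Fin t => Yat ω (i : ℕ)))
        = ent p (fun ω : Traj mx my ms T =>
            (A ω, fun i : Fin (t + 1) => Yat ω (i : ℕ))) := by
      refine ent_congr
        (fun v : (Fin (ms + 1) × (Fin T → Fin (mx + 1))) × (Fin (t + 1) → ℤ) =>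
          (v.1, v.2 (Fin.last t), fun i : Fin t => v.2 i.castSucc))
        (fun w : (Fin (ms + 1) × (Fin T → Fin (mx + 1))) × ℤ × (Fin t → ℤ) =>
          (w.1, Fin.snoc w.2.2 w.2.1)) (fun ω => rfl) (fun ω => ?_)
      refine Prod.ext rfl ?_
      show Fin.snoc (fun i : Fin t => Yat ω (i : ℕ)) (Yat ω t)
          = fun i : Fin (t + 1) => Yat ω (i : ℕ)
      funext i
      refine Fin.lastCases ?_ (fun j => ?_) i
      · exact Fin.snoc_last (α := fun _ => ℤ) ..
      · exact Fin.snoc_castSucc (α := fun _ => ℤ) ..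
    simp only [condMutInfo, hGf, hFf]
    rw [eY, eAY]
    ring
  calc ∑ t ∈ Finset.range T,
        condMutInfo p (fun ω => (Xat ω t, Sat ω t)) (fun ω => Yat ω t)
          (fun ω => fun i : Fin t => Yat ω (i : ℕ))
      ≤ ∑ t ∈ Finset.range T,
        condMutInfo p A (fun ω => Yat ω t) (fun ω => fun i : Fin t => Yat ω (i : ℕ)) :=
        Finset.sum_le_sum step1
    _ = ∑ t ∈ Finset.range T, ((Gf t - Gf (t + 1)) + (Ff (t + 1) - Ff t)) :=
        Finset.sum_congr rfl fun t _ => chain t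
    _ = (Gf 0 - Gf T) + (Ff T - Ff 0) := by
        rw [Finset.sum_add_distrib, Finset.sum_range_sub' Gf, Finset.sum_range_sub Ff]
    _ = mutInfo p A (fun ω => ω.2.2) := by
        have hG0 : Gf 0 = ent p A := by
          simp only [hGf]
          exact ent_congr (fun a : Fin (ms + 1) × (Fin T → Fin (mx + 1)) =>
              (a, fun _ : Fin 0 => (0 : ℤ)))
            (fun w : (Fin (ms + 1) × (Fin T → Fin (mx + 1))) × (Fin 0 → ℤ) => w.1)
            (fun ω => Prod.ext rfl (funext fun i => i.elim0))
            (fun ω => rfl)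
        have hF0 : Ff 0 = 0 := by
          simp only [hFf]
          have hconst : (fun ω : Traj mx my ms T => fun i : Fin 0 => Yat ω (i : ℕ))
              = fun _ => (fun i : Fin 0 => (0 : ℤ)) := by
            funext ω i; exact i.elim0
          rw [hconst]
          exact ent_const hps _
        have hFT : Ff T = ent p (fun ω : Traj mx my ms T => ω.2.2) := by
          simp only [hFf]
          refine ent_congr
            (fun v : Fin T → Fin (my + 1) => fun i : Fin T => ((v i : ℕ) : ℤ))
            (fun v : Fin T → ℤ => fun i : Fin T =>
              (⟨(v i).toNat % (my + 1), Nat.mod_lt _ (Nat.succ_pos my)⟩ : Fin (my + 1)))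
            (fun ω => ?_) (fun ω => ?_)
          · funext i
            simp [Yat, i.isLt]
          · funext i
            have hv : Yat ω (i : ℕ) = ((ω.2.2 i : ℕ) : ℤ) := by simp [Yat, i.isLt]
            apply Fin.ext
            simp only [hv, Int.toNat_natCast]
            exact Nat.mod_eq_of_lt (ω.2.2 i).isLt
        have hGT : Gf T = ent p (fun ω : Traj mx my ms T => (A ω, ω.2.2)) := by
          simp only [hGf]
          refine ent_congr
            (fun w : (Fin (ms + 1) × (Fin T → Fin (mx + 1))) × (Fin T → Fin (my + 1)) =>
              (w.1, fun i : Fin T => ((w.2 i : ℕ) : ℤ)))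
            (fun w : (Fin (ms + 1) × (Fin T → Fin (mx + 1))) × (Fin T → ℤ) =>
              (w.1, fun i : Fin T =>
                (⟨(w.2 i).toNat % (my + 1), Nat.mod_lt _ (Nat.succ_pos my)⟩ : Fin (my + 1))))
            (fun ω => ?_) (fun ω => ?_)
          · refine Prod.ext rfl (funext fun i => ?_)
            simp [Yat, i.isLt]
          · refine Prod.ext rfl (funext fun i => ?_)
            have hv : Yat ω (i : ℕ) = ((ω.2.2 i : ℕ) : ℤ) := by simp [Yat, i.isLt]
            apply Fin.ext
            simp only [hv, Int.toNat_natCast]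
            exact Nat.mod_eq_of_lt (ω.2.2 i).isLt
        rw [hG0, hF0, hGT, hFT]
        simp only [mutInfo]
        ring

end SmartMeter
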